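/- For a finite MDP, policy π, action a, and γ ∈ [0,1), writing ρ = (1−γ)/γ, the vector of action-value advantages satisfies q^π_a − v^π = Σ_{j=−1}^{∞} ρ^j ψ^{a,π}_j, where ψ^{a,π}_{−1} = (P_a − I) y^π_{−1}, ψ^{a,π}_0 = r_a + (P_a − I) y^π_0 − y^π_{−1}, and ψ^{a,π}_j = (P_a − I) y^π_j − y^π_{j−1} for j ≥ 1, provided the Laurent expansion v^π_γ = (1+ρ) Σ_{j=−1}^{∞} ρ^j y^π_j holds. -/

import Mathlib

open Matrix

/-- **Laurent expansion of the advantage vector** (indexing shifted by one: the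
`j`-th terms below are `y_{j-1}` and `ψ_{j-1}` of the paper, so the sums run over
`j = -1, 0, 1, …`). Let `v` be the value vector of policy `π` (solving the Bellman
equations) and `q = r_a + γ P_a v` the action-value vector of action `a`. Set
`ρ = (1-γ)/γ`. If the Laurent expansion `v = (1+ρ) Σ_{j≥-1} ρ^j y_j` holds, then
`q - v = Σ_{j≥-1} ρ^j ψ_j`, where `ψ_{-1} = (P_a - I) y_{-1}`,
`ψ_0 = r_a + (P_a - I) y_0 - y_{-1}`, and `ψ_j = (P_a - I) y_j - y_{j-1}` for
`j ≥ 1`. -/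
theorem advantage_laurent_expansion
    (n : ℕ)
    (Pπ Pa : Matrix (Fin n) (Fin n) ℝ)
    (hPπ_nonneg : ∀ i j, 0 ≤ Pπ i j) (hPπ_row : ∀ i, ∑ j, Pπ i j = 1)
    (hPa_nonneg : ∀ i j, 0 ≤ Pa i j) (hPa_row : ∀ i, ∑ j, Pa i j = 1)
    (rπ ra : Fin n → ℝ)
    (γ ρ : ℝ) (hγ0 : 0 < γ) (hγ1 : γ < 1) (hρ : ρ = (1 - γ) / γ)
    (v : Fin n → ℝ)
    (hv : v = rπ + γ • (Pπ *ᵥ v))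
    (y ψ : ℕ → Fin n → ℝ)
    -- the Laurent expansion v = (1+ρ) Σ_{j≥-1} ρ^j y_j
    (hLaurent : HasSum (fun j : ℕ => ((1 + ρ) * ρ ^ ((j : ℤ) - 1)) • y j) v)
    -- ψ_{-1} = (P_a - I) y_{-1}
    (hψ0 : ψ 0 = Pa *ᵥ y 0 - y 0)
    -- ψ_0 = r_a + (P_a - I) y_0 - y_{-1}
    (hψ1 : ψ 1 = ra + (Pa *ᵥ y 1 - y 1) - y 0)
    -- ψ_j = (P_a - I) y_j - y_{j-1} for j ≥ 1
    (hψ : ∀ j, 2 ≤ j → ψ j = (Pa *ᵥ y j - y j) - y (j - 1)) :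
    HasSum (fun j : ℕ => (ρ ^ ((j : ℤ) - 1)) • ψ j)
      ((ra + γ • (Pa *ᵥ v)) - v) := by
  have hγ : γ ≠ 0 := ne_of_gt hγ0
  have hρpos : 0 < ρ := by rw [hρ]; exact div_pos (by linarith) hγ0
  have hρ0 : ρ ≠ 0 := ne_of_gt hρpos
  have hγρ : γ * (1 + ρ) = 1 := by
    rw [hρ]; field_simp; ring
  have hγρ' : (1 - γ) * (1 + ρ) = ρ := by
    rw [hρ]; field_simp; ring
  have h1 : HasSum (fun j : ℕ => (ρ ^ ((j : ℤ) - 1)) • (Pa *ᵥ y j))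
      (γ • (Pa *ᵥ v)) := by
    have := (hLaurent.mapL (LinearMap.toContinuousLinearMap (Matrix.mulVecLin Pa))).const_smul γ
    simpa [Matrix.mulVecLin, smul_smul, ← mul_assoc, hγρ] using this
  have h2 : HasSum (fun j : ℕ => (ρ ^ ((j : ℤ) - 1)) • y j) (γ • v) := by
    have := hLaurent.const_smul γ
    simpa [smul_smul, ← mul_assoc, hγρ] using this
  have h3 : HasSum (fun j : ℕ => (ρ ^ (j : ℤ)) • y j) ((1 - γ) • v) := by
    have := hLaurent.const_smul (1 - γ)
    have e : ∀ j : ℕ, (1 - γ) * ((1 + ρ) * ρ ^ ((j : ℤ) - 1)) = ρ ^ (j : ℤ) := by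
      intro j
      rw [← mul_assoc, hγρ', zpow_sub_one₀ hρ0]
      field_simp
    simpa [smul_smul, e] using this
  have h3s : HasSum (fun j : ℕ => if j = 0 then (0 : Fin n → ℝ)
      else (ρ ^ ((j : ℤ) - 1)) • y (j - 1)) ((1 - γ) • v) := by
    have hinj : Function.Injective (fun j : ℕ => j + 1) := fun a b h => by simpa using h
    rw [← Function.Injective.hasSum_iff hinj]
    · have e : ((fun j : ℕ => if j = 0 then (0 : Fin n → ℝ)
          else (ρ ^ ((j : ℤ) - 1)) • y (j - 1)) ∘ (fun j : ℕ => j + 1))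
          = fun j : ℕ => (ρ ^ (j : ℤ)) • y j := by
        funext j
        have hc : (((j + 1 : ℕ) : ℤ) - 1) = (j : ℤ) := by push_cast; ring
        simp [Function.comp, hc]
      rw [e]; exact h3
    · intro j hj
      have hj0 : j = 0 := by
        by_contra h
        exact hj ⟨j - 1, by show j - 1 + 1 = j; omega⟩
      simp [hj0]
  have hra : HasSum (fun j : ℕ => if j = 1 then ra else (0 : Fin n → ℝ)) ra :=
    hasSum_ite_eq 1 ra
  have key := ((h1.sub h2).sub h3s).add hra
  have hfun : (fun j : ℕ => (ρ ^ ((j : ℤ) - 1)) • ψ j)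
      = fun j : ℕ => ((ρ ^ ((j : ℤ) - 1)) • (Pa *ᵥ y j) - (ρ ^ ((j : ℤ) - 1)) • y j
          - (if j = 0 then (0 : Fin n → ℝ) else (ρ ^ ((j : ℤ) - 1)) • y (j - 1)))
          + (if j = 1 then ra else 0) := by
    funext j
    match j with
    | 0 => simp [hψ0, smul_sub]
    | 1 =>
      simp only [hψ1, smul_sub, smul_add]
      norm_num
      abel
    | (k + 2) =>
      rw [hψ (k + 2) (by omega), if_neg (by omega : ¬ k + 2 = 0),
        if_neg (by omega : ¬ k + 2 = 1)]
      simp only [smul_sub, add_zero]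
  have hsum : γ • (Pa *ᵥ v) - γ • v - (1 - γ) • v + ra = (ra + γ • (Pa *ᵥ v)) - v := by
    have hvv : γ • v + (1 - γ) • v = v := by
      rw [← add_smul]; simp
    rw [sub_sub, hvv]; abel
  rw [hfun, ← hsum]
  exact key
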